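/- arXiv:1305.2714 — 2 statements merged into one kernel-verified Lean document; each statement's English description precedes it below -/
import Mathlib

section
/- Let C ⊆ ℝⁿ be a nonempty, closed and convex set, f : ℝⁿ → ℝ a convex function, x₀ ∈ C, λ ≥ 0, σ > 0, and let v be a standard Gaussian vector on ℝⁿ. Let x* be the unique minimizer over x ∈ C of σλ f(x) + (1/2)‖(x₀+σv) − x‖₂². Then E[‖x* − x₀‖₂²]/σ² ≤ D(λ∂f(x₀) + T_C(x₀)*), where the sum denotes the Minkowski sum of sets. -/
open MeasureTheory ProbabilityTheory Filter Topology Metric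
open scoped RealInnerProductSpace ENNReal Pointwise

noncomputable section

/-- Standard Gaussian measure on `ℝⁿ` (mean zero, identity covariance). -/
def stdGaussian (n : ℕ) : Measure (EuclideanSpace ℝ (Fin n)) :=
  Measure.map (⇑(EuclideanSpace.equiv (Fin n) ℝ).symm)
    (Measure.pi fun _ : Fin n => gaussianReal 0 1)

/-- `D(K)`: mean squared distance of a standard Gaussian vector to `K`. -/
def msd (n : ℕ) (K : Set (EuclideanSpace ℝ (Fin n))) : ℝ :=
  ∫ g, (Metric.infDist g K) ^ 2 ∂(stdGaussian n)

variable {E : Type*} [NormedAddCommGroup E] [InnerProductSpace ℝ E]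

/-- Subdifferential of `f` at `x₀`. -/
def subdiff (f : E → ℝ) (x₀ : E) : Set E :=
  {s | ∀ x, f x₀ + ⟪s, x - x₀⟫ ≤ f x}

/-- Cone generated by a set: `{c • x : c ≥ 0, x ∈ A}`. -/
def coneOf (A : Set E) : Set E :=
  {y | ∃ c : ℝ, 0 ≤ c ∧ ∃ x ∈ A, y = c • x}

/-- Set of feasible directions of `C` at `x₀`. -/
def feasible (C : Set E) (x₀ : E) : Set E := {z | x₀ + z ∈ C}

/-- Tangent cone of `C` at `x₀`: the closure of the cone of feasible directions. -/
def tangentConeOf (C : Set E) (x₀ : E) : Set E := closure (coneOf (feasible C x₀))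

/-- Polar cone of a set `K`. -/
def polarCone (K : Set E) : Set E := {v | ∀ x ∈ K, ⟪v, x⟫ ≤ 0}

open Classical in
/-- Metric projection onto `K` (the unique nearest point when `K` is nonempty,
closed and convex). -/
def projSet (K : Set E) (x : E) : E :=
  if h : ∃ y ∈ K, dist x y = Metric.infDist x K then h.choose else x

/-- Matrix-vector multiplication as a map between Euclidean spaces. -/
def matVec {m n : ℕ} (A : Matrix (Fin m) (Fin n) ℝ) (x : EuclideanSpace ℝ (Fin n)) :
    EuclideanSpace ℝ (Fin m) :=
  (EuclideanSpace.equiv (Fin m) ℝ).symm (A.mulVec (EuclideanSpace.equiv (Fin n) ℝ x))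

/-- Statistical dimension of `K`: `E ‖Proj(g,K)‖²` for standard Gaussian `g`. -/
def statDim (n : ℕ) (K : Set (EuclideanSpace ℝ (Fin n))) : ℝ :=
  ∫ g, ‖projSet K g‖ ^ 2 ∂(stdGaussian n)

end

section Aux

open Set


lemma convexOn_pi_continuous {n : ℕ} (f : (Fin n → ℝ) → ℝ)
    (hf : ConvexOn ℝ Set.univ f) : Continuous f := by
  have key : ∀ y₀ : Fin n → ℝ, Filter.IsBoundedUnder (· ≤ ·) (nhds y₀) f := by
    intro y₀
    set V : Set (Fin n → ℝ) := Set.pi Set.univ (fun i => {y₀ i - 1, y₀ i + 1}) with hV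
    have hVfin : V.Finite := Set.Finite.pi (fun i => (Set.finite_singleton _).insert _)
    obtain ⟨M, hM⟩ := (hVfin.image f).bddAbove
    have hhull : Set.pi Set.univ (fun i => Set.Icc (y₀ i - 1) (y₀ i + 1)) ⊆ convexHull ℝ V := by
      rw [hV, convexHull_pi]
      refine Set.pi_mono fun i _ => ?_
      rw [convexHull_pair, segment_eq_Icc (by linarith)]
    refine ⟨M, Filter.eventually_map.mpr ?_⟩
    filter_upwards [Metric.ball_mem_nhds y₀ one_pos] with x hx
    have hxQ : x ∈ Set.pi Set.univ (fun i => Set.Icc (y₀ i - 1) (y₀ i + 1)) := by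
      rw [Set.mem_univ_pi]
      intro i
      have := dist_le_pi_dist x y₀ i
      have hd : dist x y₀ < 1 := hx
      have : |x i - y₀ i| ≤ dist x y₀ := by
        simpa [Real.dist_eq] using this
      obtain ⟨h1, h2⟩ := abs_le.mp (this.trans hd.le)
      simp only [Set.mem_Icc]
      refine ⟨by linarith, by linarith⟩
    obtain ⟨y, hyV, hle⟩ := hf.exists_ge_of_mem_convexHull (Set.subset_univ V) (hhull hxQ)
    exact hle.trans (hM (Set.mem_image_of_mem f hyV))
  have hex : ∃ x₀ ∈ (Set.univ : Set (Fin n → ℝ)),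
      Filter.IsBoundedUnder (· ≤ ·) (nhds x₀) f := ⟨0, Set.mem_univ 0, key 0⟩
  have h2 := ((hf.continuousOn_tfae isOpen_univ Set.univ_nonempty).out 3 1).mp hex
  exact continuousOn_univ.mp h2


lemma exists_subgradient {n : ℕ} (f : EuclideanSpace ℝ (Fin n) → ℝ)
    (hf : ConvexOn ℝ Set.univ f) (x₀ : EuclideanSpace ℝ (Fin n)) :
    ∃ s : EuclideanSpace ℝ (Fin n), ∀ x, f x₀ + ⟪s, x - x₀⟫ ≤ f x := by
  classical
  -- continuity of f
  have hcont : Continuous f := by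
    set lm := ((EuclideanSpace.equiv (Fin n) ℝ).symm.toLinearEquiv.toLinearMap :
      (Fin n → ℝ) →ₗ[ℝ] EuclideanSpace ℝ (Fin n)) with hlm
    have h := hf.comp_linearMap lm
    have hg : ConvexOn ℝ Set.univ (f ∘ ⇑lm) := by simpa using h
    have hgc : Continuous (f ∘ ⇑lm) := convexOn_pi_continuous _ hg
    have hfe : f = (f ∘ ⇑lm) ∘ ⇑(EuclideanSpace.equiv (Fin n) ℝ) := rfl
    rw [hfe]
    exact hgc.comp (EuclideanSpace.equiv (Fin n) ℝ).continuous
  -- the open convex set above the graph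
  set U : Set (EuclideanSpace ℝ (Fin n) × ℝ) := {p | f p.1 < p.2} with hU
  have hUopen : IsOpen U := isOpen_lt (hcont.comp continuous_fst) continuous_snd
  have hUconv : Convex ℝ U := by
    intro p hp q hq a b ha hb hab
    simp only [hU, Set.mem_setOf_eq] at *
    have h2 := hf.2 (Set.mem_univ p.1) (Set.mem_univ q.1) ha hb hab
    simp only [smul_eq_mul] at h2
    calc f (a • p + b • q).1 = f (a • p.1 + b • q.1) := rfl
    _ ≤ a * f p.1 + b * f q.1 := h2
    _ < a * p.2 + b * q.2 := by
        rcases eq_or_lt_of_le ha with rfl | ha'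
        · have hb' : b = 1 := by linarith
          subst hb'; simpa using hq
        · rcases eq_or_lt_of_le hb with rfl | hb'
          · have ha'' : a = 1 := by linarith
            subst ha''; simpa using hp
          · have h1 : a * f p.1 < a * p.2 := (mul_lt_mul_iff_right₀ ha').mpr hp
            have h2 : b * f q.1 < b * q.2 := (mul_lt_mul_iff_right₀ hb').mpr hq
            linarith
    _ = (a • p + b • q).2 := rfl
  have hnot : (x₀, f x₀) ∉ U := by simp [hU]
  obtain ⟨l, hl⟩ := geometric_hahn_banach_open_point hUconv hUopen hnot
  set c : ℝ := l (0, 1) with hc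
  have hlsplit : ∀ x : EuclideanSpace ℝ (Fin n), ∀ t : ℝ, l (x, t) = l (x, 0) + t * c := by
    intro x t
    have hxt : (x, t) = (x, (0:ℝ)) + t • ((0 : EuclideanSpace ℝ (Fin n)), (1:ℝ)) := by
      simp [Prod.ext_iff]
    rw [hxt, map_add, l.map_smul, smul_eq_mul]
  have hkey : ∀ x : EuclideanSpace ℝ (Fin n), ∀ ε > (0:ℝ),
      l (x, 0) + (f x + ε) * c < l (x₀, 0) + f x₀ * c := by
    intro x ε hε
    have hmem : (x, f x + ε) ∈ U := by simp [hU, hε]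
    have h := hl _ hmem
    have e1 := hlsplit x (f x + ε)
    have e2 := hlsplit x₀ (f x₀)
    linarith
  have hcneg : c < 0 := by
    have h1 := hkey x₀ 1 one_pos
    nlinarith
  have hcpos : 0 < -c := by linarith
  have hB : ∀ x : EuclideanSpace ℝ (Fin n),
      l (x, 0) + f x * c ≤ l (x₀, 0) + f x₀ * c := by
    intro x
    by_contra hcon
    push_neg at hcon
    set δ := (l (x, 0) + f x * c) - (l (x₀, 0) + f x₀ * c) with hδ
    have hδpos : 0 < δ := by simp only [hδ]; linarith
    have hε' : 0 < δ / (-c) / 2 := by positivity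
    have hεc : (δ / (-c) / 2) * c = -(δ/2) := by
      rw [div_div, div_mul_eq_mul_div, div_eq_iff (ne_of_gt (mul_pos hcpos two_pos))]
      ring
    have h := hkey x _ hε'
    have hexp : (f x + δ / (-c) / 2) * c = f x * c + (δ / (-c) / 2) * c := by ring
    rw [hexp, hεc] at h
    linarith
  -- Riesz representation
  set φ : EuclideanSpace ℝ (Fin n) →L[ℝ] ℝ :=
    l.comp (ContinuousLinearMap.inl ℝ (EuclideanSpace ℝ (Fin n)) ℝ) with hφ
  have hφapp : ∀ x : EuclideanSpace ℝ (Fin n), φ x = l (x, 0) := fun x => rfl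
  set v : EuclideanSpace ℝ (Fin n) := (InnerProductSpace.toDual ℝ _).symm φ with hv
  refine ⟨(-c)⁻¹ • v, fun x => ?_⟩
  have hB' := hB x
  rw [← hφapp, ← hφapp] at hB'
  have hinner : ⟪(-c)⁻¹ • v, x - x₀⟫ = (-c)⁻¹ * (φ x - φ x₀) := by
    rw [real_inner_smul_left, hv]
    rw [show φ x - φ x₀ = φ (x - x₀) by rw [map_sub]]
    rw [InnerProductSpace.toDual_symm_apply]
  rw [hinner]
  have hkey2 : (-c)⁻¹ * (φ x - φ x₀) ≤ f x - f x₀ := by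
    rw [inv_mul_le_iff₀ hcpos]
    nlinarith
  linarith

lemma map_eval_pi' {n : ℕ} (μ : Fin n → Measure ℝ) [∀ i, IsProbabilityMeasure (μ i)]
    (i : Fin n) : Measure.map (Function.eval i) (Measure.pi μ) = μ i := by
  ext s hs
  rw [Measure.map_apply (measurable_pi_apply i) hs, Set.eval_preimage, Measure.pi_pi]
  rw [Finset.prod_eq_single i (fun j _ hj => by simp [Function.update_of_ne hj])
    (by simp)]
  simp

lemma integrable_sq_gaussian : Integrable (fun x : ℝ => x ^ 2) (gaussianReal 0 1) := by
  rw [gaussianReal_of_var_ne_zero 0 one_ne_zero]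
  rw [integrable_withDensity_iff (measurable_gaussianPDF 0 1)
    (Filter.Eventually.of_forall fun x => ENNReal.ofReal_lt_top)]
  have heq : (fun x : ℝ => x ^ 2 * (gaussianPDF 0 1 x).toReal) =
      fun x : ℝ => (√(2 * Real.pi))⁻¹ * (x ^ 2 * Real.exp (-(1/2) * x ^ 2)) := by
    funext x
    rw [gaussianPDF, ENNReal.toReal_ofReal (gaussianPDFReal_nonneg 0 1 x), gaussianPDFReal]
    push_cast
    rw [show -(x - 0) ^ 2 / (2 * 1) = -(1/2) * x ^ 2 by ring]
    ring
  rw [heq]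
  have hbase : Integrable (fun x : ℝ => x ^ 2 * Real.exp (-(1/2) * x ^ 2)) := by
    have h := integrable_rpow_mul_exp_neg_mul_sq (by norm_num : (0:ℝ) < 1/2)
      (s := 2) (by norm_num)
    have h2 : ∀ x : ℝ, x ^ (2:ℝ) = x ^ (2:ℕ) := fun x => by
      rw [show (2:ℝ) = ((2:ℕ):ℝ) by norm_num, Real.rpow_natCast]
    simpa [h2] using h
  exact hbase.const_mul _

instance isProbabilityMeasure_stdGaussian (n : ℕ) :
    IsProbabilityMeasure (stdGaussian n) :=
  Measure.isProbabilityMeasure_map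
    ((EuclideanSpace.equiv (Fin n) ℝ).symm.continuous.measurable.aemeasurable)

lemma integrable_sq_norm_stdGaussian (n : ℕ) :
    Integrable (fun w : EuclideanSpace ℝ (Fin n) => ‖w‖ ^ 2) (stdGaussian n) := by
  rw [_root_.stdGaussian, integrable_map_measure (g := fun w : EuclideanSpace ℝ (Fin n) => ‖w‖ ^ 2)
    ((continuous_norm.pow 2).aestronglyMeasurable)
    ((EuclideanSpace.equiv (Fin n) ℝ).symm.continuous.measurable.aemeasurable)]
  have heq : ((fun w : EuclideanSpace ℝ (Fin n) => ‖w‖ ^ 2) ∘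
      ⇑(EuclideanSpace.equiv (Fin n) ℝ).symm) =
      fun x : Fin n → ℝ => ∑ i, (x i) ^ 2 := by
    funext x
    show ‖(EuclideanSpace.equiv (Fin n) ℝ).symm x‖ ^ 2 = _
    rw [EuclideanSpace.norm_eq, Real.sq_sqrt (by positivity)]
    simp [sq_abs]
  rw [heq]
  apply integrable_finset_sum
  intro i _
  have hcomp : (fun x : Fin n → ℝ => (x i) ^ 2) = (fun r : ℝ => r ^ 2) ∘ (Function.eval i) :=
    rfl
  rw [hcomp]
  have hint := integrable_sq_gaussian
  rw [← map_eval_pi' (fun _ : Fin n => gaussianReal 0 1) i] at hint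
  exact (integrable_map_measure ((continuous_pow 2).aestronglyMeasurable)
    (measurable_pi_apply i).aemeasurable).mp hint

lemma integrable_infDist_sq (n : ℕ) (K : Set (EuclideanSpace ℝ (Fin n))) (hK : K.Nonempty) :
    Integrable (fun w => Metric.infDist w K ^ 2) (stdGaussian n) := by
  obtain ⟨k₀, hk₀⟩ := hK
  refine Integrable.mono' (((integrable_sq_norm_stdGaussian n).const_mul 2).add
    (integrable_const (2 * ‖k₀‖ ^ 2)))
    (((continuous_infDist_pt K).pow 2).aestronglyMeasurable) ?_
  refine Filter.Eventually.of_forall fun w => ?_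
  simp only [Pi.add_apply]
  rw [Real.norm_eq_abs, abs_of_nonneg (by positivity)]
  have h1 : Metric.infDist w K ≤ dist w k₀ := Metric.infDist_le_dist_of_mem hk₀
  have h2 : dist w k₀ ≤ ‖w‖ + ‖k₀‖ := by
    rw [dist_eq_norm]; exact norm_sub_le _ _
  have h0 : 0 ≤ Metric.infDist w K := Metric.infDist_nonneg
  nlinarith [norm_nonneg w, norm_nonneg k₀, sq_nonneg (‖w‖ - ‖k₀‖),
    mul_self_le_mul_self h0 (h1.trans h2)]

lemma key_bound {E : Type*} [NormedAddCommGroup E] [InnerProductSpace ℝ E]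
     (C : Set E) (hCconv : Convex ℝ C) (f : E → ℝ) (hf : ConvexOn ℝ Set.univ f)
    (x₀ : E) (hx₀ : x₀ ∈ C) (lam σ : ℝ) (hlam : 0 ≤ lam) (hσ : 0 < σ)
    (w xs : E) (hxsC : xs ∈ C)
    (hmin : IsMinOn (fun x => σ * lam * f x + (1 / 2) * ‖(x₀ + σ • w) - x‖ ^ 2) C xs)
    (s : E) (hs : s ∈ subdiff f x₀) (u : E) (hu : u ∈ polarCone (tangentConeOf C x₀)) :
    ‖xs - x₀‖ ≤ σ * ‖w - (lam • s + u)‖ := by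
  have hsl : 0 ≤ σ * lam := mul_nonneg hσ.le hlam
  set y : E := x₀ + σ • w with hy
  set e : E := xs - x₀ with he
  set d : E := x₀ - xs with hd
  -- Step A
  have stepA : ⟪y - xs, d⟫ ≤ σ * lam * (f x₀ - f xs) := by
    refine le_of_forall_pos_le_add fun ε hε => ?_
    set t : ℝ := min 1 (2 * ε / (‖d‖ ^ 2 + 1)) with ht
    have hden : (0:ℝ) < ‖d‖ ^ 2 + 1 := by positivity
    have ht0 : 0 < t := lt_min one_pos (by positivity)
    have ht1 : t ≤ 1 := min_le_left _ _
    set z : E := xs + t • d with hz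
    have hzC : z ∈ C := by
      have hmem := hCconv hxsC hx₀ (by linarith : (0:ℝ) ≤ 1 - t) ht0.le (by ring)
      have hzeq : z = (1 - t) • xs + t • x₀ := by
        rw [hz, hd]; module
      rwa [hzeq]
    have hcmp := (isMinOn_iff.mp hmin) z hzC
    have hfz : f z ≤ (1 - t) * f xs + t * f x₀ := by
      have h2 := hf.2 (Set.mem_univ xs) (Set.mem_univ x₀)
        (by linarith : (0:ℝ) ≤ 1 - t) ht0.le (by ring)
      simp only [smul_eq_mul] at h2
      have hzeq : z = (1 - t) • xs + t • x₀ := by rw [hz, hd]; module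
      rw [hzeq]; exact h2
    have hnorm : ‖y - z‖ ^ 2 = ‖y - xs‖ ^ 2 - 2 * (t * ⟪y - xs, d⟫) + t ^ 2 * ‖d‖ ^ 2 := by
      have hyz : y - z = (y - xs) - t • d := by rw [hz]; abel
      rw [hyz, norm_sub_sq_real, real_inner_smul_right, norm_smul, Real.norm_eq_abs,
        abs_of_pos ht0, mul_pow]
    have h5 : t * ⟪y - xs, d⟫ ≤ t * (σ * lam * (f x₀ - f xs) + t / 2 * ‖d‖ ^ 2) := by
      have hscaled := mul_le_mul_of_nonneg_left hfz hsl
      nlinarith [hcmp, hnorm, hscaled]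
    have h6 : ⟪y - xs, d⟫ ≤ σ * lam * (f x₀ - f xs) + t / 2 * ‖d‖ ^ 2 :=
      (mul_le_mul_iff_right₀ ht0).mp h5
    have ht2 : t ≤ 2 * ε / (‖d‖ ^ 2 + 1) := min_le_right _ _
    have ht3 : t * (‖d‖ ^ 2 + 1) ≤ 2 * ε := by
      rw [le_div_iff₀ hden] at ht2; exact ht2
    have h7 : t / 2 * ‖d‖ ^ 2 ≤ ε := by nlinarith
    linarith
  -- Step B
  have stepB : f x₀ - f xs ≤ -⟪s, e⟫ := by
    have := hs xs
    rw [← he] at this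
    linarith
  -- Step C
  have stepC : ⟪u, e⟫ ≤ 0 := by
    refine hu e (subset_closure ⟨1, zero_le_one, e, ?_, (one_smul ℝ e).symm⟩)
    show x₀ + e ∈ C
    rw [he]
    simpa using hxsC
  -- combine
  have hyxs : y - xs = σ • w - e := by rw [hy, he]; abel
  have hA' : ‖e‖ ^ 2 - σ * ⟪w, e⟫ ≤ σ * lam * (f x₀ - f xs) := by
    have hdne : d = -e := by rw [hd, he]; abel
    have : ⟪y - xs, d⟫ = σ * ⟪w, e⟫ - ‖e‖ ^ 2 → False ∨ True := fun _ => Or.inr trivial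
    have hips : ⟪y - xs, d⟫ = -(σ * ⟪w, e⟫) + ‖e‖ ^ 2 := by
      rw [hyxs, hdne, inner_neg_right, inner_sub_left, real_inner_smul_left,
        real_inner_self_eq_norm_sq]
      ring
    rw [hips] at stepA
    linarith
  have hB' : σ * lam * (f x₀ - f xs) ≤ -(σ * lam * ⟪s, e⟫) := by
    have := mul_le_mul_of_nonneg_left stepB hsl
    linarith
  have hC' : -(σ * ⟪u, e⟫) ≥ 0 := by
    have := mul_nonpos_of_nonneg_of_nonpos hσ.le stepC
    linarith
  have hmain : ‖e‖ ^ 2 ≤ σ * ⟪w - (lam • s + u), e⟫ := by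
    have hexp : ⟪w - (lam • s + u), e⟫ = ⟪w, e⟫ - lam * ⟪s, e⟫ - ⟪u, e⟫ := by
      rw [inner_sub_left, inner_add_left, real_inner_smul_left]; ring
    rw [hexp]
    nlinarith [hA', hB', hC']
  have hcs : ⟪w - (lam • s + u), e⟫ ≤ ‖w - (lam • s + u)‖ * ‖e‖ := real_inner_le_norm _ _
  rcases eq_or_lt_of_le (norm_nonneg e) with h0 | hpos
  · rw [he] at h0
    rw [← h0]
    positivity
  · have : ‖e‖ * ‖e‖ ≤ (σ * ‖w - (lam • s + u)‖) * ‖e‖ := by nlinarith [hmain, hcs]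
    have := le_of_mul_le_mul_right this hpos
    rwa [he] at this

end Aux

/-- General upper bound for constrained-and-regularized denoising.
For any `σ > 0` and `λ ≥ 0`, the NMSE of the minimizer of
`σλ f(x) + ½‖(x₀+σv) − x‖²` over `C` is at most `D(λ∂f(x₀) + T_C(x₀)*)`. -/

theorem statement3 {n : ℕ} (C : Set (EuclideanSpace ℝ (Fin n)))
    (hCne : C.Nonempty) (hCcl : IsClosed C) (hCconv : Convex ℝ C)
    (f : EuclideanSpace ℝ (Fin n) → ℝ) (hf : ConvexOn ℝ Set.univ f)
    (x₀ : EuclideanSpace ℝ (Fin n)) (hx₀ : x₀ ∈ C)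
    (lam : ℝ) (hlam : 0 ≤ lam) (σ : ℝ) (hσ : 0 < σ)
    (xstar : EuclideanSpace ℝ (Fin n) → EuclideanSpace ℝ (Fin n))
    (hxstar : ∀ w, xstar w ∈ C ∧
      IsMinOn (fun x => σ * lam * f x + (1 / 2) * ‖(x₀ + σ • w) - x‖ ^ 2) C (xstar w)) :
    (∫ w, ‖xstar w - x₀‖ ^ 2 ∂(stdGaussian n)) / σ ^ 2 ≤
      msd n (lam • subdiff f x₀ + polarCone (tangentConeOf C x₀)) := by
  classical
  set K : Set (EuclideanSpace ℝ (Fin n)) :=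
    lam • subdiff f x₀ + polarCone (tangentConeOf C x₀) with hK
  obtain ⟨s, hs⟩ := exists_subgradient f hf x₀
  have hs' : s ∈ subdiff f x₀ := hs
  have h0polar : (0 : EuclideanSpace ℝ (Fin n)) ∈ polarCone (tangentConeOf C x₀) := by
    intro x _
    simp [inner_zero_left]
  have hKne : K.Nonempty :=
    ⟨lam • s + 0, Set.add_mem_add (Set.smul_mem_smul_set hs') h0polar⟩
  have hpt : ∀ w, ‖xstar w - x₀‖ ^ 2 ≤ σ ^ 2 * Metric.infDist w K ^ 2 := by
    intro w
    have hb : ‖xstar w - x₀‖ ≤ σ * Metric.infDist w K := by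
      have hmain : ∀ k ∈ K, ‖xstar w - x₀‖ / σ ≤ dist w k := by
        intro k hk
        rw [hK] at hk
        obtain ⟨a, ha, b, hbmem, rfl⟩ := Set.mem_add.mp hk
        obtain ⟨s', hs'', rfl⟩ := ha
        have hkb := key_bound C hCconv f hf x₀ hx₀ lam σ hlam hσ w (xstar w)
          (hxstar w).1 (hxstar w).2 s' hs'' b hbmem
        rw [div_le_iff₀ hσ, dist_eq_norm]
        calc ‖xstar w - x₀‖ ≤ σ * ‖w - (lam • s' + b)‖ := hkb
          _ = ‖w - (lam • s' + b)‖ * σ := mul_comm _ _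
      have hdiv : ‖xstar w - x₀‖ / σ ≤ Metric.infDist w K := by
        by_contra hcon
        push_neg at hcon
        obtain ⟨k, hkK, hklt⟩ := (Metric.infDist_lt_iff hKne).mp hcon
        exact absurd hklt (not_lt.mpr (hmain k hkK))
      calc ‖xstar w - x₀‖ = (‖xstar w - x₀‖ / σ) * σ := by field_simp
        _ ≤ Metric.infDist w K * σ := mul_le_mul_of_nonneg_right hdiv hσ.le
        _ = σ * Metric.infDist w K := mul_comm _ _
    calc ‖xstar w - x₀‖ ^ 2 ≤ (σ * Metric.infDist w K) ^ 2 :=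
        pow_le_pow_left₀ (norm_nonneg _) hb 2
      _ = σ ^ 2 * Metric.infDist w K ^ 2 := mul_pow _ _ 2
  have hint : Integrable (fun w => σ ^ 2 * Metric.infDist w K ^ 2) (stdGaussian n) :=
    (integrable_infDist_sq n K hKne).const_mul _
  have hmono : (∫ w, ‖xstar w - x₀‖ ^ 2 ∂(stdGaussian n)) ≤
      ∫ w, σ ^ 2 * Metric.infDist w K ^ 2 ∂(stdGaussian n) :=
    integral_mono_of_nonneg (Filter.Eventually.of_forall fun w => by positivity) hint
      (Filter.Eventually.of_forall hpt)
  rw [integral_const_mul] at hmono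
  rw [div_le_iff₀ (by positivity : (0:ℝ) < σ ^ 2)]
  rw [msd]
  linarith
end

section
/- Let f : ℝⁿ → ℝ be a convex function, C ⊆ ℝⁿ a nonempty, closed and convex set, x₀ ∈ C, τ ≥ 0, z ∈ ℝⁿ, and y = x₀ + z. Let f̂_{x₀}(x) = f(x₀) + sup_{s∈∂f(x₀)} ⟨s, x−x₀⟩ and Ĉ_{x₀} = x₀ + T_C(x₀). Let x̂ be the unique minimizer over x ∈ Ĉ_{x₀} of τ f̂_{x₀}(x) + (1/2)‖y − x‖₂². Then x̂ − x₀ = Π(z, τ∂f(x₀) + T_C(x₀)*), i.e. the error of the approximated problem equals the distance vector from z to the closed convex set τ∂f(x₀) + T_C(x₀)*. -/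
open MeasureTheory ProbabilityTheory Filter Topology Metric
open scoped RealInnerProductSpace ENNReal Pointwise Matrix

/-- Borel/product measurable structure on real matrices. -/
instance matrixMeasurableSpace {m n : ℕ} : MeasurableSpace (Matrix (Fin m) (Fin n) ℝ) :=
  (inferInstance : MeasurableSpace (Fin m → Fin n → ℝ))

section AuxLemmas

open Set

variable {E : Type*} [NormedAddCommGroup E] [InnerProductSpace ℝ E]

lemma mem_coneOf_of_mem {A : Set E} {x : E} (hx : x ∈ A) : x ∈ coneOf A :=
  ⟨1, zero_le_one, x, hx, (one_smul ℝ x).symm⟩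

lemma coneOf_smul_mem {A : Set E} {c : ℝ} (hc : 0 ≤ c) {x : E} (hx : x ∈ coneOf A) :
    c • x ∈ coneOf A := by
  obtain ⟨c', hc', a, ha, rfl⟩ := hx
  exact ⟨c * c', mul_nonneg hc hc', a, ha, (smul_smul c c' a)⟩

lemma coneOf_add_mem {A : Set E} (hA : Convex ℝ A) {x y : E}
    (hx : x ∈ coneOf A) (hy : y ∈ coneOf A) : x + y ∈ coneOf A := by
  obtain ⟨c₁, hc₁, a₁, ha₁, rfl⟩ := hx
  obtain ⟨c₂, hc₂, a₂, ha₂, rfl⟩ := hy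
  rcases eq_or_lt_of_le (add_nonneg hc₁ hc₂) with h | h
  · have h1 : c₁ = 0 := by linarith
    have h2 : c₂ = 0 := by linarith
    refine ⟨0, le_rfl, a₁, ha₁, by simp [h1, h2]⟩
  · refine ⟨c₁ + c₂, h.le, (c₁ / (c₁ + c₂)) • a₁ + (c₂ / (c₁ + c₂)) • a₂,
      hA ha₁ ha₂ (div_nonneg hc₁ h.le) (div_nonneg hc₂ h.le) (by field_simp), ?_⟩
    rw [smul_add, smul_smul, smul_smul]
    rw [mul_div_cancel₀ _ (ne_of_gt h), mul_div_cancel₀ _ (ne_of_gt h)]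

lemma coneOf_convex {A : Set E} (hA : Convex ℝ A) : Convex ℝ (coneOf A) := by
  intro x hx y hy a b ha hb hab
  exact coneOf_add_mem hA (coneOf_smul_mem ha hx) (coneOf_smul_mem hb hy)

section Tangent

variable {C : Set E} {x₀ : E}

lemma feasible_convex (hC : Convex ℝ C) : Convex ℝ (feasible C x₀) := by
  intro z hz w hw a b ha hb hab
  have h : a • (x₀ + z) + b • (x₀ + w) = (a + b) • x₀ + (a • z + b • w) := by module
  rw [hab, one_smul] at h
  show x₀ + (a • z + b • w) ∈ C
  rw [← h]
  exact hC hz hw ha hb hab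

lemma zero_mem_feasible (hx₀ : x₀ ∈ C) : (0 : E) ∈ feasible C x₀ := by
  show x₀ + 0 ∈ C; simpa using hx₀

lemma tangent_zero_mem (hx₀ : x₀ ∈ C) : (0 : E) ∈ tangentConeOf C x₀ :=
  subset_closure (mem_coneOf_of_mem (zero_mem_feasible hx₀))

lemma tangent_isClosed : IsClosed (tangentConeOf C x₀) := isClosed_closure

lemma tangent_convex (hC : Convex ℝ C) : Convex ℝ (tangentConeOf C x₀) :=
  (coneOf_convex (feasible_convex hC)).closure

lemma tangent_smul_mem {c : ℝ} (hc : 0 ≤ c) {w : E} (hw : w ∈ tangentConeOf C x₀) :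
    c • w ∈ tangentConeOf C x₀ :=
  map_mem_closure (continuous_const_smul c) hw fun _ ha => coneOf_smul_mem hc ha

lemma tangent_add_mem (hC : Convex ℝ C) {w₁ w₂ : E} (h₁ : w₁ ∈ tangentConeOf C x₀)
    (h₂ : w₂ ∈ tangentConeOf C x₀) : w₁ + w₂ ∈ tangentConeOf C x₀ :=
  map_mem_closure₂ continuous_add h₁ h₂ fun _ ha _ hb =>
    coneOf_add_mem (feasible_convex hC) ha hb

end Tangent

section Polar

variable {T : Set E}

lemma polar_zero_mem : (0 : E) ∈ polarCone T := fun x _ => by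
  simp [inner_zero_left]

lemma polar_isClosed : IsClosed (polarCone T) := by
  have : polarCone T = ⋂ x ∈ T, {v : E | ⟪v, x⟫ ≤ 0} := by
    ext v; simp [polarCone]
  rw [this]
  exact isClosed_biInter fun x _ =>
    isClosed_le (continuous_id.inner continuous_const) continuous_const

lemma polar_convex : Convex ℝ (polarCone T) := by
  intro v₁ h₁ v₂ h₂ a b ha hb _
  intro x hx
  have e : ⟪a • v₁ + b • v₂, x⟫ = a * ⟪v₁, x⟫ + b * ⟪v₂, x⟫ := by
    rw [inner_add_left, real_inner_smul_left, real_inner_smul_left]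
  rw [e]
  have := h₁ x hx; have := h₂ x hx
  nlinarith

lemma polar_smul_mem {c : ℝ} (hc : 0 ≤ c) {v : E} (hv : v ∈ polarCone T) :
    c • v ∈ polarCone T := fun x hx => by
  rw [real_inner_smul_left]
  exact mul_nonpos_of_nonneg_of_nonpos hc (hv x hx)

lemma polar_add_mem {v₁ v₂ : E} (h₁ : v₁ ∈ polarCone T) (h₂ : v₂ ∈ polarCone T) :
    v₁ + v₂ ∈ polarCone T := fun x hx => by
  rw [inner_add_left]
  exact add_nonpos (h₁ x hx) (h₂ x hx)

lemma mem_of_forall_polar [CompleteSpace E] (h0 : (0:E) ∈ T) (hcl : IsClosed T)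
    (hsmul : ∀ c : ℝ, 0 < c → ∀ x ∈ T, c • x ∈ T)
    (hadd : ∀ x ∈ T, ∀ y ∈ T, x + y ∈ T)
    {w : E} (hw : ∀ v ∈ polarCone T, ⟪w, v⟫ ≤ 0) : w ∈ T := by
  by_contra hcon
  let K : ConvexCone ℝ E :=
    { carrier := T
      smul_mem' := fun c hc x hx => hsmul c hc x hx
      add_mem' := fun x hx y hy => hadd x hx y hy }
  obtain ⟨y, hy1, hy2⟩ :=
    ProperCone.hyperplane_separation' (E := E) ({
      carrier := T
      add_mem' := fun hx hy => hadd _ hx _ hy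
      zero_mem' := h0
      smul_mem' := fun c x hx => by
        rcases (zero_le (a := c)).eq_or_lt with h | h
        · rw [← h, zero_smul]; exact h0
        · exact hsmul c (by exact_mod_cast h) x hx
      isClosed' := hcl } : ProperCone ℝ E) hcon
  have hmem : (-y) ∈ polarCone T := by
    intro x hx
    have h := hy1 x hx
    rw [inner_neg_left]
    have := real_inner_comm x y
    linarith [real_inner_comm y x]
  have h2 := hw _ hmem
  rw [inner_neg_right] at h2
  have h3 := real_inner_comm y w
  linarith

end Polar

section Subdiff

variable {f : E → ℝ} {x₀ : E}

lemma subdiff_isClosed : IsClosed (subdiff f x₀) := by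
  have : subdiff f x₀ = ⋂ x, {s : E | f x₀ + ⟪s, x - x₀⟫ ≤ f x} := by
    ext s; simp [subdiff]
  rw [this]
  exact isClosed_iInter fun x =>
    isClosed_le (continuous_const.add (continuous_id.inner continuous_const)) continuous_const

lemma subdiff_convex : Convex ℝ (subdiff f x₀) := by
  intro s₁ h₁ s₂ h₂ a b ha hb hab
  intro x
  have e : ⟪a • s₁ + b • s₂, x - x₀⟫ = a * ⟪s₁, x - x₀⟫ + b * ⟪s₂, x - x₀⟫ := by
    rw [inner_add_left, real_inner_smul_left, real_inner_smul_left]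
  have i₁ := h₁ x; have i₂ := h₂ x
  rw [e]
  have j₁ : a * (f x₀ + ⟪s₁, x - x₀⟫) ≤ a * f x := mul_le_mul_of_nonneg_left i₁ ha
  have j₂ : b * (f x₀ + ⟪s₂, x - x₀⟫) ≤ b * f x := mul_le_mul_of_nonneg_left i₂ hb
  have j₃ : (a + b) * f x = f x := by rw [hab, one_mul]
  have j₄ : (a + b) * f x₀ = f x₀ := by rw [hab, one_mul]
  nlinarith [j₁, j₂, j₃, j₄]

variable [FiniteDimensional ℝ E]

lemma subdiff_nonempty (hf : ConvexOn ℝ Set.univ f) (x₀ : E) : (subdiff f x₀).Nonempty := by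
  have hcont : Continuous f := by
    rw [← continuousOn_univ]
    exact hf.continuousOn isOpen_univ
  set S : Set (E × ℝ) := {p | f p.1 < p.2} with hS
  have hSopen : IsOpen S := isOpen_lt (hcont.comp continuous_fst) continuous_snd
  have hSconv : Convex ℝ S := by
    intro p hp q hq a b ha hb hab
    simp only [hS, Set.mem_setOf_eq] at hp hq ⊢
    have key := hf.2 (Set.mem_univ p.1) (Set.mem_univ q.1) ha hb hab
    simp only [smul_eq_mul] at key
    rcases eq_or_lt_of_le ha with h | h
    · have hb1 : b = 1 := by linarith
      have : f ((a • p + b • q).1) ≤ a * f p.1 + b * f q.1 := key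
      have : (a • p + b • q).2 = a * p.2 + b * q.2 := rfl
      show f ((a • p + b • q).1) < (a • p + b • q).2
      calc f ((a • p + b • q).1) ≤ a * f p.1 + b * f q.1 := key
        _ < a * p.2 + b * q.2 := by rw [← h, hb1]; simpa using hq
        _ = (a • p + b • q).2 := rfl
    · show f ((a • p + b • q).1) < (a • p + b • q).2
      calc f ((a • p + b • q).1) ≤ a * f p.1 + b * f q.1 := key
        _ < a * p.2 + b * q.2 := by
            have h1 : a * f p.1 < a * p.2 := by exact (mul_lt_mul_iff_right₀ h).2 hp
            have h2 : b * f q.1 ≤ b * q.2 := mul_le_mul_of_nonneg_left hq.le hb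
            linarith
        _ = (a • p + b • q).2 := rfl
  have hx₀notin : ((x₀, f x₀) : E × ℝ) ∉ S := by simp [hS]
  obtain ⟨L, hL⟩ := geometric_hahn_banach_open_point hSconv hSopen hx₀notin
  set c : ℝ := L (0, 1) with hc_def
  have hsplit : ∀ (x : E) (t : ℝ), L (x, t) = L (x, 0) + t * c := by
    intro x t
    have : ((x, t) : E × ℝ) = (x, 0) + t • ((0 : E), (1 : ℝ)) := by
      simp [Prod.ext_iff]
    rw [this, map_add, L.map_smul, smul_eq_mul]
  have hc : c < 0 := by
    have h1 := hL (x₀, f x₀ + 1) (by simp [hS])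
    rw [hsplit x₀ (f x₀ + 1), hsplit x₀ (f x₀)] at h1
    nlinarith
  have key : ∀ x : E, L (x, 0) + f x * c ≤ L (x₀, 0) + f x₀ * c := by
    intro x
    by_contra hcontra
    push_neg at hcontra
    set g : ℝ := L (x, 0) + f x * c - (L (x₀, 0) + f x₀ * c) with hg
    have hg0 : 0 < g := by linarith
    have h2c : (0:ℝ) < -2 * c := by linarith
    have hε : 0 < g / (-2 * c) := div_pos hg0 h2c
    have hmemS : ((x, f x + g / (-2 * c)) : E × ℝ) ∈ S := by
      show f x < f x + g / (-2 * c)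
      linarith
    have h1 := hL _ hmemS
    rw [hsplit x _, hsplit x₀ _] at h1
    have h2 : g / (-2 * c) * (-2 * c) = g := div_mul_cancel₀ g (ne_of_gt h2c)
    nlinarith [h1, h2]
  set φ : E →L[ℝ] ℝ := L.comp (ContinuousLinearMap.inl ℝ E ℝ) with hφ
  have hφ_eq : ∀ x : E, φ x = L (x, 0) := fun x => rfl
  refine ⟨(InnerProductSpace.toDual ℝ E).symm ((-c)⁻¹ • φ), ?_⟩
  intro x
  have hinner : ⟪(InnerProductSpace.toDual ℝ E).symm ((-c)⁻¹ • φ), x - x₀⟫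
      = (-c)⁻¹ * (L (x, 0) - L (x₀, 0)) := by
    rw [InnerProductSpace.toDual_symm_apply]
    have : ((x - x₀ : E), (0:ℝ)) = (x, 0) - (x₀, 0) := by simp [Prod.ext_iff]
    show (-c)⁻¹ • φ (x - x₀) = (-c)⁻¹ * (L (x, 0) - L (x₀, 0))
    rw [smul_eq_mul]
    congr 1
    rw [hφ_eq, this, map_sub]
  rw [hinner]
  have hkey := key x
  have hcpos : (0:ℝ) < -c := by linarith
  have h4 : (-c)⁻¹ * (L (x, 0) - L (x₀, 0)) ≤ f x - f x₀ := by
    rw [inv_mul_le_iff₀ hcpos]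
    nlinarith
  linarith

lemma subdiff_bounded (hf : ConvexOn ℝ Set.univ f) (x₀ : E) :
    ∃ R : ℝ, 0 ≤ R ∧ ∀ s ∈ subdiff f x₀, ‖s‖ ≤ R := by
  have hcont : Continuous f := by
    rw [← continuousOn_univ]
    exact hf.continuousOn isOpen_univ
  obtain ⟨xm, _, hxm⟩ := (isCompact_closedBall x₀ 1).exists_isMaxOn
    ⟨x₀, by simp⟩ hcont.continuousOn
  set M := f xm with hM
  refine ⟨max (M - f x₀) 0, le_max_right _ _, ?_⟩
  intro s hs
  rcases eq_or_ne s 0 with rfl | hs0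
  · simp
  · have hu : x₀ + ‖s‖⁻¹ • s ∈ Metric.closedBall x₀ 1 := by
      have h0 : ‖s‖ ≠ 0 := norm_ne_zero_iff.2 hs0
      simp only [Metric.mem_closedBall, dist_eq_norm, add_sub_cancel_left, norm_smul,
        norm_inv, norm_norm]
      rw [inv_mul_cancel₀ h0]
    have h1 := hs (x₀ + ‖s‖⁻¹ • s)
    rw [add_sub_cancel_left, real_inner_smul_right, real_inner_self_eq_norm_sq] at h1
    have hsn : 0 < ‖s‖ := norm_pos_iff.2 hs0
    have h2 : ‖s‖⁻¹ * ‖s‖ ^ 2 = ‖s‖ := by field_simp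
    rw [h2] at h1
    have h3 : f (x₀ + ‖s‖⁻¹ • s) ≤ M := hxm hu
    have : ‖s‖ ≤ M - f x₀ := by linarith
    exact le_trans this (le_max_left _ _)

end Subdiff

section Proj

variable [CompleteSpace E]

lemma projSet_spec {K : Set E} (hne : K.Nonempty) (hcl : IsClosed K) (hconv : Convex ℝ K)
    [ProperSpace E] (z : E) :
    projSet K z ∈ K ∧ ∀ k ∈ K, ⟪z - projSet K z, k - projSet K z⟫ ≤ 0 := by
  have hex : ∃ y ∈ K, dist z y = Metric.infDist z K := by
    obtain ⟨y, hy, h⟩ := hcl.exists_infDist_eq_dist hne z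
    exact ⟨y, hy, h.symm⟩
  rw [projSet, dif_pos hex]
  obtain ⟨hpK, hpd⟩ := hex.choose_spec
  refine ⟨hpK, ?_⟩
  have hKne : Nonempty K := hne.to_subtype
  have hnorm : ‖z - hex.choose‖ = ⨅ w : K, ‖z - w‖ := by
    rw [← dist_eq_norm, hpd, Metric.infDist_eq_iInf]
    congr 1; ext w; rw [dist_eq_norm]
  exact (norm_eq_iInf_iff_real_inner_le_zero hconv hpK).1 hnorm

end Proj

end AuxLemmas

set_option maxHeartbeats 1000000 in
/-- Exact solution of the first-order approximated problem.
If `x̂` minimizes `τ f̂_{x₀}(x) + ½‖(x₀+z) − x‖²` over `Ĉ_{x₀} = x₀ + T_C(x₀)`,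
then `x̂ − x₀ = Π(z, τ∂f(x₀) + T_C(x₀)*) = z − Proj(z, τ∂f(x₀) + T_C(x₀)*)`. -/
theorem statement9 {n : ℕ} (f : EuclideanSpace ℝ (Fin n) → ℝ)
    (hf : ConvexOn ℝ Set.univ f)
    (C : Set (EuclideanSpace ℝ (Fin n)))
    (hCne : C.Nonempty) (hCcl : IsClosed C) (hCconv : Convex ℝ C)
    (x₀ : EuclideanSpace ℝ (Fin n)) (hx₀ : x₀ ∈ C)
    (τ : ℝ) (hτ : 0 ≤ τ) (z : EuclideanSpace ℝ (Fin n))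
    (xhat : EuclideanSpace ℝ (Fin n))
    (hmem : xhat ∈ (fun w => x₀ + w) '' tangentConeOf C x₀)
    (hmin : IsMinOn
      (fun x => τ * (f x₀ + sSup ((fun s => ⟪s, x - x₀⟫) '' subdiff f x₀)) +
        (1 / 2) * ‖(x₀ + z) - x‖ ^ 2)
      ((fun w => x₀ + w) '' tangentConeOf C x₀) xhat) :
    xhat - x₀ =
      z - projSet (τ • subdiff f x₀ + polarCone (tangentConeOf C x₀)) z := by
  classical
  obtain ⟨what, hwhatT, rfl⟩ := hmem
  set T := tangentConeOf C x₀ with hT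
  set D := subdiff f x₀ with hD
  set P := polarCone T with hP
  -- facts about D
  have hDne : D.Nonempty := subdiff_nonempty hf x₀
  obtain ⟨s₁, hs₁⟩ := hDne
  obtain ⟨R, hR0, hR⟩ := subdiff_bounded hf x₀
  have hDcl : IsClosed D := subdiff_isClosed
  have hDcompact : IsCompact D := by
    refine (isCompact_closedBall (0 : EuclideanSpace ℝ (Fin n)) R).of_isClosed_subset hDcl ?_
    intro s hs
    simpa [Metric.mem_closedBall, dist_eq_norm] using hR s hs
  have hτDcompact : IsCompact (τ • D) := by
    rw [← Set.image_smul]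
    exact hDcompact.image (continuous_const_smul τ)
  have hτDconv : Convex ℝ (τ • D) := subdiff_convex.smul τ
  set K := τ • D + P with hK
  have hKne : K.Nonempty :=
    ⟨τ • s₁ + 0, Set.add_mem_add (Set.smul_mem_smul_set hs₁) polar_zero_mem⟩
  have hKcl : IsClosed K := IsClosed.add_left_of_isCompact polar_isClosed hτDcompact
  have hKconv : Convex ℝ K := hτDconv.add polar_convex
  obtain ⟨hpK, hvar⟩ := projSet_spec hKne hKcl hKconv z
  set p := projSet K z with hp
  obtain ⟨d, hd, v, hv, hdvp⟩ := Set.mem_add.1 hpK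
  obtain ⟨s₀, hs₀, rfl⟩ := Set.mem_smul_set.1 hd
  set w' := z - p with hw'
  -- variational consequences of projection
  have hvarP : ∀ v' ∈ P, ⟪w', v'⟫ ≤ 0 := by
    intro v' hv'
    have hk : τ • s₀ + (v + v') ∈ K := Set.add_mem_add hd (polar_add_mem hv hv')
    have h := hvar _ hk
    have e : τ • s₀ + (v + v') - p = v' := by rw [← hdvp]; abel
    rwa [e] at h
  have hw'T : w' ∈ T :=
    mem_of_forall_polar (tangent_zero_mem hx₀) tangent_isClosed
      (fun c hc x hx => tangent_smul_mem hc.le hx)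
      (fun x hx y hy => tangent_add_mem hCconv hx hy) hvarP
  have hvperp : ⟪w', v⟫ = 0 := by
    have h1 : ⟪w', v⟫ ≤ 0 := by
      have hk : τ • s₀ + (2:ℝ) • v ∈ K :=
        Set.add_mem_add hd (polar_smul_mem (by norm_num) hv)
      have h := hvar _ hk
      have e : τ • s₀ + (2:ℝ) • v - p = v := by rw [← hdvp, two_smul]; abel
      rwa [e] at h
    have h2 : ⟪w', -v⟫ ≤ 0 := by
      have hk : τ • s₀ + 0 ∈ K := Set.add_mem_add hd polar_zero_mem
      have h := hvar _ hk
      have e : τ • s₀ + 0 - p = -v := by rw [← hdvp]; abel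
      rwa [e] at h
    rw [inner_neg_right] at h2
    linarith
  have hdmax : ∀ s ∈ D, τ * ⟪s, w'⟫ ≤ ⟪τ • s₀, w'⟫ := by
    intro s hs
    have hk : τ • s + v ∈ K := Set.add_mem_add (Set.smul_mem_smul_set hs) hv
    have h := hvar _ hk
    have e : τ • s + v - p = τ • s - τ • s₀ := by rw [← hdvp]; abel
    rw [e, inner_sub_right (𝕜 := ℝ) w' (τ • s) (τ • s₀), real_inner_smul_right] at h
    rw [real_inner_comm w' s, real_inner_comm w' (τ • s₀)]
    linarith
  -- sup facts
  have hbdd : ∀ w : EuclideanSpace ℝ (Fin n), BddAbove ((fun s => ⟪s, w⟫) '' D) := by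
    intro w
    refine ⟨R * ‖w‖, ?_⟩
    rintro a ⟨s, hs, rfl⟩
    calc ⟪s, w⟫ ≤ ‖s‖ * ‖w‖ := real_inner_le_norm s w
      _ ≤ R * ‖w‖ := mul_le_mul_of_nonneg_right (hR s hs) (norm_nonneg w)
  have hσ_ge : ∀ w : EuclideanSpace ℝ (Fin n), ∀ s ∈ D, ⟪s, w⟫ ≤ sSup ((fun s => ⟪s, w⟫) '' D) := by
    intro w s hs
    exact le_csSup (hbdd w) ⟨s, hs, rfl⟩
  have hσ'_le : τ * sSup ((fun s => ⟪s, w'⟫) '' D) ≤ ⟪τ • s₀, w'⟫ := by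
    rcases eq_or_lt_of_le hτ with rfl | h
    · rw [zero_mul, zero_smul, inner_zero_left]
    · have hle : sSup ((fun s => ⟪s, w'⟫) '' D) ≤ ⟪τ • s₀, w'⟫ / τ := by
        refine csSup_le (Set.Nonempty.image _ ⟨s₁, hs₁⟩) ?_
        rintro a ⟨s, hs, rfl⟩
        rw [le_div_iff₀ h]
        have := hdmax s hs
        linarith [mul_comm τ ⟪s, w'⟫]
      calc τ * sSup ((fun s => ⟪s, w'⟫) '' D) ≤ τ * (⟪τ • s₀, w'⟫ / τ) :=
            mul_le_mul_of_nonneg_left hle hτ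
        _ = ⟪τ • s₀, w'⟫ := by field_simp
  -- w' is a minimizer
  have hstar_min : ∀ w ∈ T,
      τ * (f x₀ + sSup ((fun s => ⟪s, w'⟫) '' D)) + (1 / 2) * ‖z - w'‖ ^ 2 ≤
        τ * (f x₀ + sSup ((fun s => ⟪s, w⟫) '' D)) + (1 / 2) * ‖z - w‖ ^ 2 := by
    intro w hwT
    have hzw' : z - w' = p := by rw [hw']; abel
    have e1 : ⟪p, w' - w⟫ ≤ (1 / 2) * ‖z - w‖ ^ 2 - (1 / 2) * ‖p‖ ^ 2 := by
      have hid := norm_add_sq_real p (z - w - p)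
      have e : p + (z - w - p) = z - w := by abel
      rw [e] at hid
      have e' : z - w - p = w' - w := by rw [hw']; abel
      rw [e'] at hid
      nlinarith [sq_nonneg ‖w' - w‖]
    have e2 : ⟪τ • s₀, w⟫ ≤ τ * sSup ((fun s => ⟪s, w⟫) '' D) := by
      have := hσ_ge w s₀ hs₀
      rw [real_inner_smul_left]
      exact mul_le_mul_of_nonneg_left this hτ
    have e4 : ⟪v, w⟫ ≤ 0 := hv w hwT
    have e5 : ⟪v, w'⟫ = 0 := by rw [real_inner_comm]; exact hvperp
    have hexpand : ⟪p, w' - w⟫ = ⟪τ • s₀, w'⟫ - ⟪τ • s₀, w⟫ + ⟪v, w'⟫ - ⟪v, w⟫ := by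
      rw [← hdvp, inner_add_left, inner_sub_right (𝕜 := ℝ) (τ • s₀) w' w,
        inner_sub_right (𝕜 := ℝ) v w' w]
      ring
    rw [hzw']
    linarith
  -- use hmin at x₀ + w'
  have hmem' : x₀ + w' ∈ (fun w => x₀ + w) '' T := ⟨w', hw'T, rfl⟩
  have hmin1 := isMinOn_iff.1 hmin (x₀ + w') hmem'
  simp only [add_sub_cancel_left, add_sub_add_left_eq_sub] at hmin1
  have hmin2 := hstar_min what hwhatT
  have hFeq : τ * (f x₀ + sSup ((fun s => ⟪s, what⟫) '' D)) + (1 / 2) * ‖z - what‖ ^ 2 =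
      τ * (f x₀ + sSup ((fun s => ⟪s, w'⟫) '' D)) + (1 / 2) * ‖z - w'‖ ^ 2 :=
    le_antisymm hmin1 hmin2
  -- uniqueness via the midpoint
  set m := (1/2 : ℝ) • what + (1/2 : ℝ) • w' with hm
  have hmT : m ∈ T :=
    tangent_convex hCconv hwhatT hw'T (by norm_num) (by norm_num) (by norm_num)
  have hσm : sSup ((fun s => ⟪s, m⟫) '' D) ≤
      (1/2) * sSup ((fun s => ⟪s, what⟫) '' D) + (1/2) * sSup ((fun s => ⟪s, w'⟫) '' D) := by
    refine csSup_le (Set.Nonempty.image _ ⟨s₁, hs₁⟩) ?_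
    rintro a ⟨s, hs, rfl⟩
    have h1 := hσ_ge what s hs
    have h2 := hσ_ge w' s hs
    show ⟪s, m⟫ ≤ _
    rw [hm, inner_add_right, real_inner_smul_right, real_inner_smul_right]
    linarith
  have hab : z - m = (1/2 : ℝ) • ((z - what) + (z - w')) := by
    rw [hm]; module
  have hnormm : ‖z - m‖ ^ 2 =
      (1/2) * ‖z - what‖ ^ 2 + (1/2) * ‖z - w'‖ ^ 2 - (1/4) * ‖what - w'‖ ^ 2 := by
    have hpl := parallelogram_law_with_norm ℝ (z - what) (z - w')
    have e : (z - what) - (z - w') = -(what - w') := by abel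
    rw [e] at hpl
    have h1 : ‖z - m‖ = (1/2 : ℝ) * ‖(z - what) + (z - w')‖ := by
      rw [hab, norm_smul]; simp
    have h2 : ‖-(what - w')‖ = ‖what - w'‖ := norm_neg _
    rw [h2] at hpl
    have h3 : ‖z - m‖ ^ 2 = (1/4) * ‖(z - what) + (z - w')‖ ^ 2 := by
      rw [h1]; ring
    have hpl' : ‖(z - what) + (z - w')‖ ^ 2 + ‖what - w'‖ ^ 2 =
        2 * (‖z - what‖ ^ 2 + ‖z - w'‖ ^ 2) := by
      simp only [pow_two]
      linarith [hpl]
    rw [h3]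
    linarith
  have hmidmin := hstar_min m hmT
  have hτσm : τ * sSup ((fun s => ⟪s, m⟫) '' D) ≤
      τ * ((1/2) * sSup ((fun s => ⟪s, what⟫) '' D) +
        (1/2) * sSup ((fun s => ⟪s, w'⟫) '' D)) :=
    mul_le_mul_of_nonneg_left hσm hτ
  have hnorm0 : ‖what - w'‖ = 0 := by
    nlinarith [norm_nonneg (what - w'), sq_nonneg ‖what - w'‖]
  have hfinal : what = w' := by
    rwa [norm_eq_zero, sub_eq_zero] at hnorm0
  rw [add_sub_cancel_left, hfinal]
end
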